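/- arXiv:2604.26713 — 2 statements merged into one kernel-verified Lean document; each statement's English description precedes it below -/
import Mathlib

section
/- Minimality of the attractor: if S : ℝ → Set E is a family such that for every t the fibre S t is nonempty, closed and contained in A t, and S is invariant for the reachable-set operator, i.e. Φ t t₀ (S t₀) = S t for all t₀ ≤ t, then S t = A t for every t ∈ ℝ. -/
open MeasureTheory Set Metric Pointwise
open scoped RealInnerProductSpace

noncomputable section

abbrev Euc (d : ℕ) : Type := EuclideanSpace ℝ (Fin d)

/-- The set of admissible controls: measurable functions with values in the closed unit ball. -/
def ctrlSet (d : ℕ) : Set (ℝ → Euc d) :=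
  {ξ | Measurable ξ ∧ ∀ s, ‖ξ s‖ ≤ 1}

/-- The attractor fibre at time `t`. -/
def Afib (d : ℕ) (Ψ : ℝ → ℝ → (Euc d →L[ℝ] Euc d)) (ρ t : ℝ) : Set (Euc d) :=
  {x | ∃ ξ ∈ ctrlSet d, x = ρ • ∫ s in Set.Iic t, Ψ t s (ξ s)}

/-- The reachable-set operator of the linear differential inclusion. -/
def reach (d : ℕ) (Ψ : ℝ → ℝ → (Euc d →L[ℝ] Euc d)) (ρ t t₀ : ℝ) (S : Set (Euc d)) :
    Set (Euc d) :=
  {y | ∃ x₀ ∈ S, ∃ ξ ∈ ctrlSet d, y = Ψ t t₀ x₀ + ρ • ∫ s in Set.Icc t₀ t, Ψ t s (ξ s)}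

/-- Integrability of `exp (γ s)` on `Iic τ`. -/
lemma exp_mul_integrableOn_Iic {γ : ℝ} (hγ : 0 < γ) (τ : ℝ) :
    IntegrableOn (fun s => Real.exp (γ * s)) (Set.Iic τ) := by
  refine integrableOn_Iic_of_intervalIntegral_norm_bounded
    (Real.exp (γ * τ) / γ) τ (a := fun y : ℝ => y) (l := Filter.atBot)
    (fun y => ((Real.continuous_exp.comp (continuous_const.mul continuous_id)).integrableOn_Ioc))
    Filter.tendsto_id ?_
  filter_upwards with y
  have h1 : ∫ x in y..τ, ‖Real.exp (γ * x)‖ = ∫ x in y..τ, Real.exp (γ * x) := by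
    congr 1; funext x; exact Real.norm_of_nonneg (Real.exp_pos _).le
  have h3 : ∫ x in y..τ, Real.exp (γ * x) = (Real.exp (γ * τ) - Real.exp (γ * y)) / γ := by
    rw [intervalIntegral.integral_comp_mul_left Real.exp hγ.ne', integral_exp, smul_eq_mul]
    ring
  rw [h1, h3]
  gcongr
  linarith [(Real.exp_pos (γ * y)).le]

/-- Value of `∫ s in Iic τ, exp (γ s)`. -/
lemma exp_mul_integral_Iic {γ : ℝ} (hγ : 0 < γ) (τ : ℝ) :
    ∫ s in Set.Iic τ, Real.exp (γ * s) = Real.exp (γ * τ) / γ := by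
  have hderiv : ∀ x ∈ Set.Iic τ, HasDerivAt (fun s => Real.exp (γ * s) / γ)
      (Real.exp (γ * x)) x := by
    intro x _
    have h : HasDerivAt (fun s => Real.exp (γ * s)) (Real.exp (γ * x) * γ) x := by
      have := (Real.hasDerivAt_exp (γ * x)).comp x ((hasDerivAt_id x).const_mul γ)
      simpa [mul_comm, Function.comp_def] using this
    have := h.div_const γ
    simpa [mul_div_assoc, div_self hγ.ne'] using this
  have htend : Filter.Tendsto (fun s => Real.exp (γ * s) / γ) Filter.atBot (nhds 0) := by
    have h1 : Filter.Tendsto (fun s : ℝ => γ * s) Filter.atBot Filter.atBot :=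
      Filter.Tendsto.const_mul_atBot hγ Filter.tendsto_id
    have := (Real.tendsto_exp_atBot.comp h1).div_const γ
    simpa using this
  have := integral_Iic_of_hasDerivAt_of_tendsto' hderiv (exp_mul_integrableOn_Iic hγ τ) htend
  simpa using this

/-- Integrability of the exponential bound. -/
lemma Kexp_integrableOn (K : ℝ) {γ : ℝ} (hγ : 0 < γ) (τ : ℝ) :
    IntegrableOn (fun s => K * Real.exp (-γ * (τ - s))) (Set.Iic τ) := by
  have e : ∀ s : ℝ, K * Real.exp (-γ * τ) * Real.exp (γ * s) = K * Real.exp (-γ * (τ - s)) := by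
    intro s; rw [mul_assoc, ← Real.exp_add]; ring_nf
  have := (exp_mul_integrableOn_Iic hγ τ).const_mul (K * Real.exp (-γ * τ))
  exact this.congr (Filter.Eventually.of_forall fun s => e s)

lemma Kexp_integral (K : ℝ) {γ : ℝ} (hγ : 0 < γ) (τ : ℝ) :
    ∫ s in Set.Iic τ, K * Real.exp (-γ * (τ - s)) = K / γ := by
  have e : ∀ s : ℝ, K * Real.exp (-γ * (τ - s)) = K * Real.exp (-γ * τ) * Real.exp (γ * s) := by
    intro s; rw [mul_assoc, ← Real.exp_add]; ring_nf
  simp_rw [e]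
  rw [integral_const_mul, exp_mul_integral_Iic hγ]
  rw [show K * Real.exp (-γ * τ) * (Real.exp (γ * τ) / γ)
      = K * (Real.exp (-γ * τ) * Real.exp (γ * τ)) / γ by ring, ← Real.exp_add]
  norm_num

/-- Integrability of the controlled integrand. -/
lemma ctrl_integrableOn (d : ℕ) (Ψ : ℝ → ℝ → (Euc d →L[ℝ] Euc d))
    (hΨc : Continuous fun p : ℝ × ℝ => Ψ p.1 p.2)
    (K γ : ℝ) (hγ : 0 < γ)
    (hstab : ∀ s t : ℝ, s ≤ t → ‖Ψ t s‖ ≤ K * Real.exp (-γ * (t - s)))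
    {ξ : ℝ → Euc d} (hξ : ξ ∈ ctrlSet d) (τ : ℝ) :
    IntegrableOn (fun s => Ψ τ s (ξ s)) (Set.Iic τ) := by
  have hmeas : Measurable fun s => Ψ τ s (ξ s) := by
    have h1 : Measurable fun s : ℝ => ((Ψ τ s : Euc d →L[ℝ] Euc d), ξ s) :=
      ((hΨc.comp (continuous_const.prodMk continuous_id)).measurable).prodMk hξ.1
    exact (isBoundedBilinearMap_apply (𝕜 := ℝ)).continuous.measurable.comp h1
  refine Integrable.mono' (Kexp_integrableOn K hγ τ) hmeas.aestronglyMeasurable ?_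
  filter_upwards [ae_restrict_mem measurableSet_Iic] with s hs
  calc ‖Ψ τ s (ξ s)‖ ≤ ‖Ψ τ s‖ * ‖ξ s‖ := (Ψ τ s).le_opNorm _
    _ ≤ ‖Ψ τ s‖ * 1 := mul_le_mul_of_nonneg_left (hξ.2 s) (norm_nonneg _)
    _ = ‖Ψ τ s‖ := mul_one _
    _ ≤ K * Real.exp (-γ * (τ - s)) := hstab s τ hs

/-- Uniform bound on attractor fibres. -/
lemma afib_bound (d : ℕ) (Ψ : ℝ → ℝ → (Euc d →L[ℝ] Euc d))
    (hΨc : Continuous fun p : ℝ × ℝ => Ψ p.1 p.2)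
    (K γ : ℝ) (hγ : 0 < γ)
    (hstab : ∀ s t : ℝ, s ≤ t → ‖Ψ t s‖ ≤ K * Real.exp (-γ * (t - s)))
    (ρ : ℝ) (hρ : 0 < ρ) (τ : ℝ) {x : Euc d} (hx : x ∈ Afib d Ψ ρ τ) :
    ‖x‖ ≤ ρ * (K / γ) := by
  obtain ⟨ξ, hξ, rfl⟩ := hx
  have hi := ctrl_integrableOn d Ψ hΨc K γ hγ hstab hξ τ
  rw [norm_smul, Real.norm_of_nonneg hρ.le]
  refine mul_le_mul_of_nonneg_left ?_ hρ.le
  calc ‖∫ s in Set.Iic τ, Ψ τ s (ξ s)‖ ≤ ∫ s in Set.Iic τ, ‖Ψ τ s (ξ s)‖ :=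
        norm_integral_le_integral_norm _
    _ ≤ ∫ s in Set.Iic τ, K * Real.exp (-γ * (τ - s)) := by
        refine setIntegral_mono_on hi.norm (Kexp_integrableOn K hγ τ) measurableSet_Iic ?_
        intro s hs
        calc ‖Ψ τ s (ξ s)‖ ≤ ‖Ψ τ s‖ * ‖ξ s‖ := (Ψ τ s).le_opNorm _
          _ ≤ ‖Ψ τ s‖ * 1 := mul_le_mul_of_nonneg_left (hξ.2 s) (norm_nonneg _)
          _ = ‖Ψ τ s‖ := mul_one _
          _ ≤ K * Real.exp (-γ * (τ - s)) := hstab s τ hs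
    _ = K / γ := Kexp_integral K hγ τ

/-- Minimality of the attractor among nonempty closed invariant subfamilies. -/
theorem attractor_minimal
    (d : ℕ) (hd : 1 ≤ d)
    (L : ℝ → (Euc d →L[ℝ] Euc d)) (hL : Continuous L)
    (Ψ : ℝ → ℝ → (Euc d →L[ℝ] Euc d))
    (hΨc : Continuous fun p : ℝ × ℝ => Ψ p.1 p.2)
    (hΨid : ∀ t : ℝ, Ψ t t = ContinuousLinearMap.id ℝ (Euc d))
    (hΨcoc : ∀ t s r : ℝ, (Ψ t s).comp (Ψ s r) = Ψ t r)
    (hΨd : ∀ (s : ℝ) (x : Euc d) (t : ℝ), HasDerivAt (fun τ => Ψ τ s x) (L t (Ψ t s x)) t)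
    (K γ : ℝ) (hK : 1 ≤ K) (hγ : 0 < γ)
    (hstab : ∀ s t : ℝ, s ≤ t → ‖Ψ t s‖ ≤ K * Real.exp (-γ * (t - s)))
    (ρ : ℝ) (hρ : 0 < ρ)
    (S : ℝ → Set (Euc d))
    (hSne : ∀ t : ℝ, (S t).Nonempty)
    (hScl : ∀ t : ℝ, IsClosed (S t))
    (hSsub : ∀ t : ℝ, S t ⊆ Afib d Ψ ρ t)
    (hSinv : ∀ t₀ t : ℝ, t₀ ≤ t → reach d Ψ ρ t t₀ (S t₀) = S t) :
    ∀ t : ℝ, S t = Afib d Ψ ρ t := by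
  intro t
  refine Subset.antisymm (hSsub t) ?_
  rintro x ⟨ξ, hξ, rfl⟩
  have hi := ctrl_integrableOn d Ψ hΨc K γ hγ hstab hξ t
  choose x₀ hx₀ using fun n : ℕ => hSne (t - n)
  have hyS : ∀ n : ℕ, Ψ t (t - n) (x₀ n) + ρ • ∫ s in Set.Icc (t - n) t, Ψ t s (ξ s) ∈ S t := by
    intro n
    rw [← hSinv (t - n) t (by simp [sub_le_self t (Nat.cast_nonneg n)])]
    exact ⟨x₀ n, hx₀ n, ξ, hξ, rfl⟩
  -- the union of the Icc's is Iic t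
  have hU : (⋃ n : ℕ, Set.Icc (t - (n : ℝ)) t) = Set.Iic t := by
    ext y
    simp only [mem_iUnion, mem_Icc, mem_Iic]
    constructor
    · rintro ⟨n, _, h⟩; exact h
    · intro hy
      obtain ⟨n, hn⟩ := exists_nat_ge (t - y)
      exact ⟨n, by linarith, hy⟩
  have hmono : Monotone fun n : ℕ => Set.Icc (t - (n : ℝ)) t := by
    intro m n hmn
    refine Set.Icc_subset_Icc ?_ le_rfl
    have : (m : ℝ) ≤ n := Nat.cast_le.2 hmn
    linarith
  have h2 : Filter.Tendsto (fun n : ℕ => ∫ s in Set.Icc (t - n) t, Ψ t s (ξ s)) Filter.atTop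
      (nhds (∫ s in Set.Iic t, Ψ t s (ξ s))) := by
    have := tendsto_setIntegral_of_monotone (fun n : ℕ => measurableSet_Icc) hmono
      (by rw [hU]; exact hi)
    rwa [hU] at this
  have h1 : Filter.Tendsto (fun n : ℕ => Ψ t (t - n) (x₀ n)) Filter.atTop (nhds 0) := by
    have hbnd : ∀ n : ℕ, ‖Ψ t (t - n) (x₀ n)‖ ≤ K * (ρ * (K / γ)) * Real.exp (-γ) ^ n := by
      intro n
      have hx0b : ‖x₀ n‖ ≤ ρ * (K / γ) :=
        afib_bound d Ψ hΨc K γ hγ hstab ρ hρ (t - n) (hSsub (t - n) (hx₀ n))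
      have hΨb : ‖Ψ t (t - n)‖ ≤ K * Real.exp (-γ * n) := by
        have h := hstab (t - n) t (by simp [sub_le_self t (Nat.cast_nonneg n)])
        simpa only [sub_sub_cancel] using h
      calc ‖Ψ t (t - n) (x₀ n)‖ ≤ ‖Ψ t (t - n)‖ * ‖x₀ n‖ := (Ψ t (t - n)).le_opNorm _
        _ ≤ (K * Real.exp (-γ * n)) * (ρ * (K / γ)) := by
            apply mul_le_mul hΨb hx0b (norm_nonneg _)
            positivity
        _ = K * (ρ * (K / γ)) * Real.exp (-γ) ^ n := by
            rw [← Real.exp_nat_mul]; ring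
    refine squeeze_zero_norm hbnd ?_
    have := (tendsto_pow_atTop_nhds_zero_of_lt_one (Real.exp_pos (-γ)).le
      (Real.exp_lt_one_iff.2 (by linarith))).const_mul (K * (ρ * (K / γ)))
    simpa using this
  have := (hScl t).mem_of_tendsto (h1.add (h2.const_smul ρ))
    (Filter.Eventually.of_forall hyS)
  simpa using this
end
end

section
/- No two distinct points of the attractor fibre admit the same outward unit normal vector: for every t ∈ ℝ, every n ∈ E with n ≠ 0, and every x₁, x₂ ∈ A t, if ⟪n, y⟫ ≤ ⟪n, x₁⟫ for all y ∈ A t and ⟪n, y⟫ ≤ ⟪n, x₂⟫ for all y ∈ A t (i.e., both x₁ and x₂ lie on the supporting hyperplane of A t with normal n), then x₁ = x₂. -/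
open MeasureTheory Set Metric Pointwise
open scoped RealInnerProductSpace

noncomputable section

lemma expInt (γ t : ℝ) (hγ : 0 < γ) :
    IntegrableOn (fun s => Real.exp (-γ * (t - s))) (Set.Iic t) := by
  have h1 : IntegrableOn (fun s => Real.exp (γ * s)) (Set.Iic t) := by
    have hF : Integrable ((Set.Iic (γ * t)).indicator Real.exp) :=
      (integrableOn_exp_Iic (γ * t)).integrable_indicator measurableSet_Iic
    have h2 := hF.comp_mul_left' hγ.ne'
    rw [← integrable_indicator_iff measurableSet_Iic]
    convert h2 using 1
    · rfl
    funext s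
    by_cases hs : s ≤ t
    · simp [Set.indicator_apply, hs, (mul_le_mul_iff_right₀ hγ).mpr hs]
    · have : ¬ γ * s ≤ γ * t := fun h => hs ((mul_le_mul_iff_right₀ hγ).mp h)
      simp [Set.indicator_apply, hs, this]
  have heq : (fun s => Real.exp (-γ * (t - s)))
      = fun s => Real.exp (-γ * t) * Real.exp (γ * s) := by
    funext s; rw [← Real.exp_add]; ring_nf
  rw [heq]
  exact h1.const_mul _

lemma intOnBound {d : ℕ} (t γ C : ℝ) (hγ : 0 < γ) (f : ℝ → Euc d)
    (hm : AEStronglyMeasurable f (volume.restrict (Set.Iic t)))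
    (hb : ∀ s ≤ t, ‖f s‖ ≤ C * Real.exp (-γ * (t - s))) :
    IntegrableOn f (Set.Iic t) := by
  refine Integrable.mono' ((expInt γ t hγ).const_mul C) hm ?_
  filter_upwards [self_mem_ae_restrict (measurableSet_Iic : MeasurableSet (Set.Iic t))] with s hs
  exact hb s hs

lemma intOnBoundR (t γ C : ℝ) (hγ : 0 < γ) (f : ℝ → ℝ)
    (hm : AEStronglyMeasurable f (volume.restrict (Set.Iic t)))
    (hb : ∀ s ≤ t, ‖f s‖ ≤ C * Real.exp (-γ * (t - s))) :
    IntegrableOn f (Set.Iic t) := by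
  refine Integrable.mono' ((expInt γ t hγ).const_mul C) hm ?_
  filter_upwards [self_mem_ae_restrict (measurableSet_Iic : MeasurableSet (Set.Iic t))] with s hs
  exact hb s hs

/-- No two distinct points of an attractor fibre admit the same outward unit normal. -/
theorem attractor_no_common_normal
    (d : ℕ) (hd : 1 ≤ d)
    (L : ℝ → (Euc d →L[ℝ] Euc d)) (hL : Continuous L)
    (Ψ : ℝ → ℝ → (Euc d →L[ℝ] Euc d))
    (hΨc : Continuous fun p : ℝ × ℝ => Ψ p.1 p.2)
    (hΨid : ∀ t : ℝ, Ψ t t = ContinuousLinearMap.id ℝ (Euc d))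
    (hΨcoc : ∀ t s r : ℝ, (Ψ t s).comp (Ψ s r) = Ψ t r)
    (hΨd : ∀ (s : ℝ) (x : Euc d) (t : ℝ), HasDerivAt (fun τ => Ψ τ s x) (L t (Ψ t s x)) t)
    (K γ : ℝ) (hK : 1 ≤ K) (hγ : 0 < γ)
    (hstab : ∀ s t : ℝ, s ≤ t → ‖Ψ t s‖ ≤ K * Real.exp (-γ * (t - s)))
    (ρ : ℝ) (hρ : 0 < ρ) :
    ∀ t : ℝ, ∀ n : Euc d, n ≠ 0 →
      ∀ x₁ ∈ Afib d Ψ ρ t, ∀ x₂ ∈ Afib d Ψ ρ t,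
        (∀ y ∈ Afib d Ψ ρ t, ⟪n, y⟫ ≤ ⟪n, x₁⟫) →
        (∀ y ∈ Afib d Ψ ρ t, ⟪n, y⟫ ≤ ⟪n, x₂⟫) →
        x₁ = x₂ := by
  intro t n hn x₁ hx₁ x₂ hx₂ hsup₁ hsup₂
  -- the adjoint family
  set v : ℝ → Euc d := fun s => ContinuousLinearMap.adjoint (Ψ t s) n with hv_def
  have hΨts : Continuous fun s => Ψ t s := hΨc.comp (Continuous.prodMk_right t)
  have hv_cont : Continuous v := by
    have : Continuous fun s => ContinuousLinearMap.adjoint (Ψ t s) :=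
      (ContinuousLinearMap.adjoint :
        (Euc d →L[ℝ] Euc d) ≃ₗᵢ⋆[ℝ] (Euc d →L[ℝ] Euc d)).continuous.comp hΨts
    exact this.clm_apply continuous_const
  have hv_ne : ∀ s : ℝ, v s ≠ 0 := by
    intro s hv0
    apply hn
    have h1 : Ψ t s (Ψ s t n) = n := by
      have := congrArg (fun A : Euc d →L[ℝ] Euc d => A n) (hΨcoc t s t)
      simpa [hΨid t] using this
    have h2 : ⟪v s, Ψ s t n⟫ = ⟪n, n⟫ := by
      rw [hv_def]
      rw [ContinuousLinearMap.adjoint_inner_left, h1]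
    rw [hv0, inner_zero_left] at h2
    exact inner_self_eq_zero.mp h2.symm
  have hv_pos : ∀ s : ℝ, 0 < ‖v s‖ := fun s => norm_pos_iff.mpr (hv_ne s)
  -- norm bounds
  have hv_bound : ∀ s ≤ t, ‖v s‖ ≤ (K * ‖n‖) * Real.exp (-γ * (t - s)) := by
    intro s hs
    calc ‖v s‖ ≤ ‖ContinuousLinearMap.adjoint (Ψ t s)‖ * ‖n‖ :=
          (ContinuousLinearMap.adjoint (Ψ t s)).le_opNorm n
      _ = ‖Ψ t s‖ * ‖n‖ := by
          rw [(ContinuousLinearMap.adjoint :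
            (Euc d →L[ℝ] Euc d) ≃ₗᵢ⋆[ℝ] (Euc d →L[ℝ] Euc d)).norm_map]
      _ ≤ (K * Real.exp (-γ * (t - s))) * ‖n‖ := by
          exact mul_le_mul_of_nonneg_right (hstab s t hs) (norm_nonneg n)
      _ = (K * ‖n‖) * Real.exp (-γ * (t - s)) := by ring
  -- integrability of the integrand for any control
  have hFmeas : ∀ ξ ∈ ctrlSet d,
      AEStronglyMeasurable (fun s => Ψ t s (ξ s)) (volume.restrict (Set.Iic t)) := by
    intro ξ hξ
    have h1 : Measurable fun s => (Ψ t s, ξ s) := hΨts.measurable.prodMk hξ.1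
    exact ((isBoundedBilinearMap_apply.continuous.measurable.comp h1)).aestronglyMeasurable
  have hFint : ∀ ξ ∈ ctrlSet d, IntegrableOn (fun s => Ψ t s (ξ s)) (Set.Iic t) := by
    intro ξ hξ
    refine intOnBound t γ K hγ _ (hFmeas ξ hξ) ?_
    intro s hs
    calc ‖Ψ t s (ξ s)‖ ≤ ‖Ψ t s‖ * ‖ξ s‖ := (Ψ t s).le_opNorm _
      _ ≤ ‖Ψ t s‖ * 1 := by
          exact mul_le_mul_of_nonneg_left (hξ.2 s) (norm_nonneg _)
      _ = ‖Ψ t s‖ := mul_one _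
      _ ≤ K * Real.exp (-γ * (t - s)) := hstab s t hs
  -- integrability of ‖v‖
  have hvint : IntegrableOn (fun s => ‖v s‖) (Set.Iic t) := by
    refine intOnBoundR t γ (K * ‖n‖) hγ _
      (hv_cont.norm.aestronglyMeasurable.restrict) ?_
    intro s hs
    rw [Real.norm_eq_abs, abs_of_nonneg (norm_nonneg _)]
    exact hv_bound s hs
  -- integrability of inner products
  have hinnerint : ∀ ξ ∈ ctrlSet d,
      IntegrableOn (fun s => ⟪v s, ξ s⟫) (Set.Iic t) := by
    intro ξ hξ
    refine intOnBoundR t γ (K * ‖n‖) hγ _ ?_ ?_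
    · have h1 : Measurable fun s => (v s, ξ s) := hv_cont.measurable.prodMk hξ.1
      exact ((continuous_inner.measurable.comp h1)).aestronglyMeasurable
    · intro s hs
      calc ‖⟪v s, ξ s⟫‖ ≤ ‖v s‖ * ‖ξ s‖ := norm_inner_le_norm _ _
        _ ≤ ‖v s‖ * 1 := mul_le_mul_of_nonneg_left (hξ.2 s) (norm_nonneg _)
        _ = ‖v s‖ := mul_one _
        _ ≤ (K * ‖n‖) * Real.exp (-γ * (t - s)) := hv_bound s hs
  -- the key computation: ⟪n, point of Afib⟫
  have key : ∀ ξ ∈ ctrlSet d,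
      ⟪n, (ρ • ∫ s in Set.Iic t, Ψ t s (ξ s) : Euc d)⟫
        = ρ * ∫ s in Set.Iic t, ⟪v s, ξ s⟫ := by
    intro ξ hξ
    rw [real_inner_smul_right, ← integral_inner (hFint ξ hξ) n]
    congr 1
    apply integral_congr_ae
    filter_upwards with s
    rw [hv_def, ContinuousLinearMap.adjoint_inner_left]
  -- pointwise bound ⟪v s, ξ s⟫ ≤ ‖v s‖
  have hpt : ∀ ξ ∈ ctrlSet d, ∀ s : ℝ, ⟪v s, ξ s⟫ ≤ ‖v s‖ := by
    intro ξ hξ s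
    have h1 := real_inner_le_norm (v s) (ξ s)
    nlinarith [hξ.2 s, norm_nonneg (v s), norm_nonneg (ξ s)]
  -- the extremal control
  set ξstar : ℝ → Euc d := fun s => ‖v s‖⁻¹ • v s with hξstar_def
  have hξstar_mem : ξstar ∈ ctrlSet d := by
    constructor
    · exact ((hv_cont.norm.inv₀ (fun s => (hv_pos s).ne')).smul hv_cont).measurable
    · intro s
      rw [hξstar_def]
      simp only [norm_smul, norm_inv, norm_norm]
      rw [inv_mul_cancel₀ (hv_pos s).ne']
  have hξstar_inner : ∀ s : ℝ, ⟪v s, ξstar s⟫ = ‖v s‖ := by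
    intro s
    rw [hξstar_def]
    simp only [real_inner_smul_right, real_inner_self_eq_norm_mul_norm]
    field_simp
  set xstar : Euc d := ρ • ∫ s in Set.Iic t, Ψ t s (ξstar s) with hxstar_def
  have hxstar_mem : xstar ∈ Afib d Ψ ρ t := ⟨ξstar, hξstar_mem, rfl⟩
  have hxstar_inner : ⟪n, xstar⟫ = ρ * ∫ s in Set.Iic t, ‖v s‖ := by
    rw [hxstar_def, key ξstar hξstar_mem]
    congr 1
    exact integral_congr_ae (Filter.Eventually.of_forall fun s => hξstar_inner s)
  -- main claim: any supporting point equals xstar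
  have main : ∀ x ∈ Afib d Ψ ρ t, (∀ y ∈ Afib d Ψ ρ t, ⟪n, y⟫ ≤ ⟪n, x⟫) → x = xstar := by
    rintro x ⟨ξ, hξ, rfl⟩ hsup
    have hle1 : ρ * ∫ s in Set.Iic t, ⟪v s, ξ s⟫ ≤ ρ * ∫ s in Set.Iic t, ‖v s‖ := by
      refine mul_le_mul_of_nonneg_left ?_ hρ.le
      exact integral_mono (hinnerint ξ hξ) hvint (fun s => hpt ξ hξ s)
    have hle2 : ρ * ∫ s in Set.Iic t, ‖v s‖ ≤ ρ * ∫ s in Set.Iic t, ⟪v s, ξ s⟫ := by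
      rw [← hxstar_inner, ← key ξ hξ]
      exact hsup xstar hxstar_mem
    have heq : ∫ s in Set.Iic t, ⟪v s, ξ s⟫ = ∫ s in Set.Iic t, ‖v s‖ :=
      mul_left_cancel₀ hρ.ne' (le_antisymm hle1 hle2)
    -- a.e. equality of the integrands
    have hg0 : (fun s => ‖v s‖ - ⟪v s, ξ s⟫) =ᵐ[volume.restrict (Set.Iic t)] 0 := by
      rw [← integral_eq_zero_iff_of_nonneg_ae]
      · rw [integral_sub hvint (hinnerint ξ hξ), heq, sub_self]
      · exact Filter.Eventually.of_forall fun s => sub_nonneg.mpr (hpt ξ hξ s)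
      · exact hvint.sub (hinnerint ξ hξ)
    have hae : (fun s => ξ s) =ᵐ[volume.restrict (Set.Iic t)] ξstar := by
      filter_upwards [hg0] with s hs
      have hinner : ⟪v s, ξ s⟫ = ‖v s‖ := by
        have : ‖v s‖ - ⟪v s, ξ s⟫ = 0 := hs
        linarith
      -- show ‖ξ s‖ = 1
      have hξnorm : ‖ξ s‖ = 1 := by
        have h1 : ⟪v s, ξ s⟫ ≤ ‖v s‖ * ‖ξ s‖ := real_inner_le_norm (v s) (ξ s)
        have h2 : 1 ≤ ‖ξ s‖ := by nlinarith [hv_pos s, hinner]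
        exact le_antisymm (hξ.2 s) h2
      have hcs : ⟪v s, ξ s⟫ = ‖v s‖ * ‖ξ s‖ := by rw [hinner, hξnorm, mul_one]
      have h3 := inner_eq_norm_mul_iff_real.mp hcs
      rw [hξnorm, one_smul] at h3
      have h4 : ξstar s = ξ s := by
        show ‖v s‖⁻¹ • v s = ξ s
        calc ‖v s‖⁻¹ • v s = ‖v s‖⁻¹ • (‖v s‖ • ξ s) := by rw [← h3]
          _ = ξ s := by rw [smul_smul, inv_mul_cancel₀ (hv_pos s).ne', one_smul]
      exact h4.symm
    have : ∫ s in Set.Iic t, Ψ t s (ξ s) = ∫ s in Set.Iic t, Ψ t s (ξstar s) := by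
      apply integral_congr_ae
      filter_upwards [hae] with s hs
      rw [hs]
    rw [hxstar_def, this]
  rw [main x₁ hx₁ hsup₁, main x₂ hx₂ hsup₂]
end
end
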